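/- arXiv:2110.14174 — 2 statements merged into one kernel-verified Lean document; each statement's English description precedes it below -/
import Mathlib

section
/- Let ω₁ = ⋯ = ω_N = ω_s and let Γ₁,...,Γ_N ∈ ℝ, not all zero. There exists an orthogonal real (N+1)×(N+1) matrix T, block diagonal with an N×N orthogonal block T̃₁ and a 1 in the last position, such that Tᵀ A T = diag(-iω_s·I_{N-1}, Â_co), where Â_co = [[-iω_s, -i√N·Γ̄],[-i√N·Γ̄, -iω_r - κ/2]] and Γ̄ = √((1/N)∑Γ_k²). Moreover TᵀB = B and CT = C. -/
open Matrix Complex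

/-- The resonant Tavis-Cummings system matrix A (all atomic detunings equal to `ω_s`),
indexed by `Fin N ⊕ Unit`. -/
noncomputable def TCmatA (N : ℕ) (κ ωs ωr : ℝ) (Γ : Fin N → ℝ) :
    Matrix (Fin N ⊕ Unit) (Fin N ⊕ Unit) ℂ :=
  Matrix.of fun i j =>
    match i, j with
    | Sum.inl a, Sum.inl b => if a = b then -Complex.I * (ωs : ℂ) else 0
    | Sum.inl a, Sum.inr _ => -Complex.I * (Γ a : ℂ)
    | Sum.inr _, Sum.inl b => -Complex.I * (Γ b : ℂ)
    | Sum.inr _, Sum.inr _ => -Complex.I * (ωr : ℂ) - (κ : ℂ) / 2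

/-- The input vector B: last entry `-√κ`, others `0`. -/
noncomputable def TCvecB (N : ℕ) (κ : ℝ) : Fin N ⊕ Unit → ℂ :=
  Sum.elim (fun _ => 0) (fun _ => -(Real.sqrt κ : ℂ))

/-- The canonical form `diag(-iω_s·I_{N-1}, Â_co)` of the resonant Tavis-Cummings model:
the first `N-1` atomic coordinates are decoupled, and the last atomic coordinate couples to
the cavity with the collective strength `√N·Γ̄`. -/
noncomputable def TChatA (N : ℕ) (κ ωs ωr : ℝ) (Γbar : ℝ) :
    Matrix (Fin N ⊕ Unit) (Fin N ⊕ Unit) ℂ :=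
  Matrix.of fun i j =>
    match i, j with
    | Sum.inl a, Sum.inl b => if a = b then -Complex.I * (ωs : ℂ) else 0
    | Sum.inl a, Sum.inr _ =>
        if a.val = N - 1 then -Complex.I * ((Real.sqrt N * Γbar : ℝ) : ℂ) else 0
    | Sum.inr _, Sum.inl b =>
        if b.val = N - 1 then -Complex.I * ((Real.sqrt N * Γbar : ℝ) : ℂ) else 0
    | Sum.inr _, Sum.inr _ => -Complex.I * (ωr : ℂ) - (κ : ℂ) / 2

/-- Structural decomposition of the resonant Tavis-Cummings model: there is a real orthogonal
transformation `T`, block diagonal with an `N×N` block and a `1` on the cavity coordinate, with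
`Tᵀ A T = diag(-iω_s·I_{N-1}, Â_co)`, `Tᵀ B = B` and `C T = C`. -/
theorem stmt_8 (N : ℕ) (hN : 2 ≤ N) (κ : ℝ) (hκ : 0 < κ) (ωs ωr : ℝ)
    (Γ : Fin N → ℝ) (hΓ : Γ ≠ 0) :
    ∃ T : Matrix (Fin N ⊕ Unit) (Fin N ⊕ Unit) ℂ,
      (∀ i j, (T i j).im = 0) ∧
      Tᵀ * T = 1 ∧
      (∀ (j : Fin N) (u : Unit), T (Sum.inl j) (Sum.inr u) = 0) ∧
      (∀ (u : Unit) (j : Fin N), T (Sum.inr u) (Sum.inl j) = 0) ∧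
      (∀ u u' : Unit, T (Sum.inr u) (Sum.inr u') = 1) ∧
      Tᵀ * TCmatA N κ ωs ωr Γ * T
        = TChatA N κ ωs ωr (Real.sqrt ((1 / N) * ∑ k, Γ k ^ 2)) ∧
      Tᵀ.mulVec (TCvecB N κ) = TCvecB N κ ∧
      Matrix.vecMul (fun i => -(TCvecB N κ i)) T = (fun i => -(TCvecB N κ i)) := by
  classical
  have hNpos : 0 < N := by omega
  set lastIdx : Fin N := ⟨N - 1, by omega⟩ with hlastdef
  set g : EuclideanSpace ℝ (Fin N) := WithLp.toLp 2 (fun j => Γ j) with hgdef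
  have hgj : ∀ j, g j = Γ j := fun j => rfl
  have hg0 : g ≠ 0 := by
    intro h
    apply hΓ
    funext j
    have := congrArg (fun x : EuclideanSpace ℝ (Fin N) => x j) h
    simpa [hgj] using this
  have hgn : ‖g‖ ≠ 0 := norm_ne_zero_iff.mpr hg0
  set v : EuclideanSpace ℝ (Fin N) := ‖g‖⁻¹ • g with hvdef
  have hv1 : ‖v‖ = 1 := by
    rw [hvdef, norm_smul, norm_inv, norm_norm, inv_mul_cancel₀ hgn]
  have hon : Orthonormal ℝ (({lastIdx} : Set (Fin N)).restrict (fun _ => v)) := by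
    constructor
    · intro i
      exact hv1
    · intro i j hij
      exact absurd (Subtype.ext (by
        have hi := i.2; have hj := j.2
        simp only [Set.mem_singleton_iff] at hi hj
        rw [hi, hj])) hij
  obtain ⟨b, hb⟩ := Orthonormal.exists_orthonormalBasis_extension_of_card_eq
    (by simp) hon
  have hbv : b lastIdx = v := hb lastIdx rfl
  have hgv : g = ‖g‖ • b lastIdx := by
    rw [hbv, hvdef, smul_smul, mul_inv_cancel₀ hgn, one_smul]
  have horth : ∀ k l : Fin N, ∑ j, b k j * b l j = if k = l then (1 : ℝ) else 0 := by
    intro k l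
    have h := (orthonormal_iff_ite.mp b.orthonormal) k l
    simpa [PiLp.inner_apply, RCLike.inner_apply, mul_comm] using h
  have hkey : ∀ k : Fin N, ∑ j, b k j * Γ j = if k = lastIdx then ‖g‖ else 0 := by
    intro k
    have h1 : (∑ j, b k j * Γ j) = (inner ℝ (b k) g : ℝ) := by
      simp [PiLp.inner_apply, RCLike.inner_apply, hgj, mul_comm]
    rw [h1]
    nth_rewrite 1 [hgv]
    rw [real_inner_smul_right, (orthonormal_iff_ite.mp b.orthonormal) k lastIdx]
    split <;> simp
  have hnorm : ‖g‖ = Real.sqrt N * Real.sqrt ((1 / N) * ∑ k, Γ k ^ 2) := by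
    rw [EuclideanSpace.norm_eq, ← Real.sqrt_mul (by positivity)]
    congr 1
    have hN0 : (N : ℝ) ≠ 0 := by positivity
    have hsum : ∀ j, ‖g j‖ ^ 2 = Γ j ^ 2 := by
      intro j
      rw [hgj]
      simp [Real.norm_eq_abs, sq_abs]
    simp only [hsum]
    field_simp
  -- complex versions
  have horthC : ∀ k l : Fin N, ∑ j, ((b k j : ℂ)) * ((b l j : ℂ))
      = if k = l then (1 : ℂ) else 0 := by
    intro k l
    have := congrArg (fun r : ℝ => (r : ℂ)) (horth k l)
    push_cast at this
    rw [this]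
    split <;> simp
  have hkeyC : ∀ k : Fin N, ∑ j, ((b k j : ℂ)) * ((Γ j : ℂ))
      = if k = lastIdx then (‖g‖ : ℂ) else 0 := by
    intro k
    have := congrArg (fun r : ℝ => (r : ℂ)) (hkey k)
    push_cast at this
    rw [this]
    split <;> simp
  refine ⟨Matrix.of (fun i j => match i, j with
    | Sum.inl a, Sum.inl c => ((b c a : ℝ) : ℂ)
    | Sum.inl _, Sum.inr _ => 0
    | Sum.inr _, Sum.inl _ => 0
    | Sum.inr _, Sum.inr _ => 1), ?_, ?_, ?_, ?_, ?_, ?_, ?_, ?_⟩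
  · rintro (a | u) (c | u') <;> simp [Matrix.of_apply]
  · ext i j
    rcases i with a | u <;> rcases j with c | u' <;>
      simp [Matrix.mul_apply, Matrix.transpose_apply, Fintype.sum_sum_type,
        Matrix.one_apply, horthC]
  · intro j u; rfl
  · intro u j; rfl
  · intro u u'; rfl
  · ext i j
    rcases i with a | u <;> rcases j with c | u'
    · simp only [Matrix.mul_apply, Matrix.transpose_apply, Fintype.sum_sum_type,
        Matrix.of_apply, TCmatA, TChatA]
      simp [Finset.sum_mul, Finset.mul_sum, mul_ite, ite_mul, Finset.sum_ite_eq]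
      have h : ∑ x : Fin N, (b a x : ℂ) * (I * (ωs : ℂ)) * (b c x : ℂ)
          = (I * (ωs : ℂ)) * ∑ x : Fin N, (b a x : ℂ) * (b c x : ℂ) := by
        rw [Finset.mul_sum]
        exact Finset.sum_congr rfl fun x _ => by ring
      rw [h, horthC]
      split <;> ring
    · simp only [Matrix.mul_apply, Matrix.transpose_apply, Fintype.sum_sum_type,
        Matrix.of_apply, TCmatA, TChatA]
      simp [Finset.sum_mul, Finset.mul_sum, mul_ite, ite_mul, Finset.sum_ite_eq]
      have h : ∑ x : Fin N, (b a x : ℂ) * (I * (Γ x : ℂ))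
          = I * ∑ x : Fin N, (b a x : ℂ) * (Γ x : ℂ) := by
        rw [Finset.mul_sum]
        exact Finset.sum_congr rfl fun x _ => by ring
      rw [h, hkeyC]
      by_cases hc : a = lastIdx
      · have hval : a.val = N - 1 := by rw [hc]
        rw [if_pos hc, if_pos hval, hnorm]
        have hs : (1 / (N : ℝ)) * ∑ k, Γ k ^ 2 = ∑ i : Fin N, (N : ℝ)⁻¹ * Γ i ^ 2 := by
          rw [Finset.mul_sum]
          simp [one_div]
        rw [hs]
        push_cast
        ring
      · have hval : ¬ a.val = N - 1 := fun h' => hc (Fin.ext h')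
        rw [if_neg hc, if_neg hval]
        simp
    · simp only [Matrix.mul_apply, Matrix.transpose_apply, Fintype.sum_sum_type,
        Matrix.of_apply, TCmatA, TChatA]
      simp [Finset.sum_mul, Finset.mul_sum, mul_ite, ite_mul, Finset.sum_ite_eq]
      have h : ∑ x : Fin N, I * (Γ x : ℂ) * (b c x : ℂ)
          = I * ∑ x : Fin N, (b c x : ℂ) * (Γ x : ℂ) := by
        rw [Finset.mul_sum]
        exact Finset.sum_congr rfl fun x _ => by ring
      rw [h, hkeyC]
      by_cases hc : c = lastIdx
      · have hval : c.val = N - 1 := by rw [hc]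
        rw [if_pos hc, if_pos hval, hnorm]
        have hs : (1 / (N : ℝ)) * ∑ k, Γ k ^ 2 = ∑ i : Fin N, (N : ℝ)⁻¹ * Γ i ^ 2 := by
          rw [Finset.mul_sum]
          simp [one_div]
        rw [hs]
        push_cast
        ring
      · have hval : ¬ c.val = N - 1 := fun h' => hc (Fin.ext h')
        rw [if_neg hc, if_neg hval]
        simp
    · simp only [Matrix.mul_apply, Matrix.transpose_apply, Fintype.sum_sum_type,
        Matrix.of_apply, TCmatA, TChatA]
      simp [Finset.sum_mul, Finset.mul_sum, mul_ite, ite_mul, Finset.sum_ite_eq]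

  · funext i
    rcases i with a | u <;>
      simp [Matrix.mulVec, dotProduct, Fintype.sum_sum_type, TCvecB]
  · funext i
    rcases i with a | u <;>
      simp [Matrix.vecMul, dotProduct, Fintype.sum_sum_type, TCvecB]
end

section
/- Suppose ω₁ = ⋯ = ω_N = ω_s, and suppose x = (x₁,...,x_N, 0) ∈ ℂ^{N+1} satisfies ∑_{k=1}^N Γ_k x_k = 0. Then x is an eigenvector of A with eigenvalue -iω_s, Cx = 0, and x†B = 0; i.e., the subspace {x : x_{N+1} = 0, ∑Γ_k x_k = 0} of dimension N-1 is an invariant decoherence-free subspace decoupled from input and output. -/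
open Matrix Complex

/-- The output row vector C: last entry `√κ`, others `0`. -/
noncomputable def TCrowC (N : ℕ) (κ : ℝ) : Fin N ⊕ Unit → ℂ :=
  Sum.elim (fun _ => 0) (fun _ => (Real.sqrt κ : ℂ))

/-- Decoherence-free subspace of the resonant Tavis-Cummings model: any vector `x` with
vanishing cavity component and `∑ Γ_k x_k = 0` is an eigenvector of `A` with eigenvalue
`-iω_s`, satisfies `Cx = 0`, and `x†B = 0`. -/
theorem stmt_9 (N : ℕ) (hN : 2 ≤ N) (κ : ℝ) (hκ : 0 < κ) (ωs ωr : ℝ)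
    (Γ : Fin N → ℝ) (x : Fin N ⊕ Unit → ℂ)
    (hcav : ∀ u : Unit, x (Sum.inr u) = 0)
    (hdark : ∑ k : Fin N, (Γ k : ℂ) * x (Sum.inl k) = 0) :
    (TCmatA N κ ωs ωr Γ).mulVec x = (-Complex.I * (ωs : ℂ)) • x ∧
    (∑ i, TCrowC N κ i * x i) = 0 ∧
    (∑ i, star (x i) * TCvecB N κ i) = 0 := by
  refine ⟨?_, ?_, ?_⟩
  · funext i
    cases i with
    | inl a =>
      simp only [Matrix.mulVec, dotProduct, TCmatA, Fintype.sum_sum_type,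
        Finset.univ_unique, Finset.sum_singleton, Matrix.of_apply, hcav, mul_zero, add_zero, Pi.smul_apply,
        smul_eq_mul]
      rw [Finset.sum_eq_single a]
      · simp
      · intro b _ hb; simp [Ne.symm hb]
      · simp
    | inr u =>
      simp only [Matrix.mulVec, dotProduct, TCmatA, Fintype.sum_sum_type,
        Finset.univ_unique, Finset.sum_singleton, Matrix.of_apply, hcav, mul_zero, add_zero, Pi.smul_apply,
        smul_eq_mul]
      have : ∑ b : Fin N, -Complex.I * (Γ b : ℂ) * x (Sum.inl b)
          = -Complex.I * ∑ k : Fin N, (Γ k : ℂ) * x (Sum.inl k) := by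
        rw [Finset.mul_sum]; exact Finset.sum_congr rfl fun b _ => by ring
      rw [this, hdark]; simp
  · simp [TCrowC, Fintype.sum_sum_type, hcav]
  · simp [TCvecB, Fintype.sum_sum_type, hcav]
end
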